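/- Let d ≥ 1 be an integer, χ a Dirichlet character modulo d, λ a real number with 0 < λ < 1, and s ∈ ℂ with s ≠ 1. Then L_λ(s, χ) = d^{−s}·∑_{a=1}^{d} λ^a·χ(a)·ζ_{λ^d}(s, a/d), where d^{−s} = exp(−s·log d). -/

import Mathlib

/-- The Hurwitz-type λ-zeta function, for real `0 < λ < 1` and real `x > 0`:
`ζ_λ(s, x) = (log λ/(1 - s))·∑_{n≥0} λ^n·(n + x)^{1-s} + ∑_{n≥0} λ^n·(n + x)^{-s}`,
complex powers of the positive real `n + x` being taken via the real logarithm. -/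
noncomputable def hurwitzLambdaZeta (lam x : ℝ) (s : ℂ) : ℂ :=
  ((Real.log lam : ℂ) / (1 - s)) *
      (∑' n : ℕ, (lam : ℂ) ^ n * ((((n : ℝ) + x : ℝ)) : ℂ) ^ (1 - s)) +
    ∑' n : ℕ, (lam : ℂ) ^ n * ((((n : ℝ) + x : ℝ)) : ℂ) ^ (-s)

/-- The Dirichlet-type λ-L-function, for real `0 < λ < 1` and a Dirichlet character `χ` mod `d`:
`L_λ(s, χ) = ∑_{m≥1} χ(m)·λ^m·m^{-s} - (log λ/(s - 1))·∑_{m≥1} χ(m)·λ^m·m^{1-s}`,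
complex powers of the positive integer `m` being taken via the real logarithm. -/
noncomputable def lambdaLFunction {d : ℕ} (χ : DirichletCharacter ℂ d) (lam : ℝ) (s : ℂ) : ℂ :=
  (∑' m : ℕ, χ ((m + 1 : ℕ) : ZMod d) * (lam : ℂ) ^ (m + 1) * ((m + 1 : ℕ) : ℂ) ^ (-s)) -
    ((Real.log lam : ℂ) / (s - 1)) *
      ∑' m : ℕ, χ ((m + 1 : ℕ) : ZMod d) * (lam : ℂ) ^ (m + 1) * ((m + 1 : ℕ) : ℂ) ^ (1 - s)

lemma aux_summable {d : ℕ} (χ : DirichletCharacter ℂ d) {lam : ℝ}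
    (h0 : 0 < lam) (h1 : lam < 1) (w : ℂ) :
    Summable (fun m : ℕ =>
      χ ((m + 1 : ℕ) : ZMod d) * (lam : ℂ) ^ (m + 1) * ((m + 1 : ℕ) : ℂ) ^ w) := by
  set k := ⌈w.re⌉₊ with hk
  have hgeom : Summable (fun m : ℕ => ((m : ℝ)) ^ k * lam ^ m) := by
    have := summable_pow_mul_geometric_of_norm_lt_one (R := ℝ) k
      (r := lam) (by rw [Real.norm_eq_abs, abs_of_pos h0]; exact h1)
    exact this
  have hmain : Summable (fun m : ℕ => (((m + 1 : ℕ) : ℝ)) ^ k * lam ^ (m + 1)) := by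
    refine (hgeom.comp_injective (add_left_injective 1)).congr fun m => ?_
    simp only [Function.comp]
  apply Summable.of_norm
  apply hmain.of_nonneg_of_le (fun m => norm_nonneg _)
  intro m
  have hnorm : ‖χ ((m + 1 : ℕ) : ZMod d) * (lam : ℂ) ^ (m + 1) * ((m + 1 : ℕ) : ℂ) ^ w‖
      = ‖χ ((m + 1 : ℕ) : ZMod d)‖ * lam ^ (m + 1) * ((m + 1 : ℕ) : ℝ) ^ w.re := by
    rw [norm_mul, norm_mul, norm_pow, Complex.norm_real, Real.norm_eq_abs, abs_of_pos h0,
      Complex.norm_natCast_cpow_of_pos (Nat.succ_pos m)]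
  rw [hnorm]
  have h1le : (1 : ℝ) ≤ ((m + 1 : ℕ) : ℝ) := by exact_mod_cast Nat.one_le_iff_ne_zero.mpr (Nat.succ_ne_zero m)
  have hrp : ((m + 1 : ℕ) : ℝ) ^ w.re ≤ ((m + 1 : ℕ) : ℝ) ^ k := by
    rw [← Real.rpow_natCast (((m + 1 : ℕ) : ℝ)) k]
    exact Real.rpow_le_rpow_of_exponent_le h1le (Nat.le_ceil w.re)
  calc ‖χ ((m + 1 : ℕ) : ZMod d)‖ * lam ^ (m + 1) * ((m + 1 : ℕ) : ℝ) ^ w.re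
      ≤ 1 * lam ^ (m + 1) * ((m + 1 : ℕ) : ℝ) ^ k := by
        apply mul_le_mul (mul_le_mul_of_nonneg_right (χ.norm_le_one _) (by positivity)) hrp
          (by positivity) (by positivity)
    _ = ((m + 1 : ℕ) : ℝ) ^ k * lam ^ (m + 1) := by ring

lemma aux_reindex {d : ℕ} (hd : d ≠ 0) (g : ℕ → ℂ) (hg : Summable g) :
    ∑' m, g m = ∑ b ∈ Finset.range d, ∑' n : ℕ, g (n * d + b) := by
  haveI : NeZero d := ⟨hd⟩
  let e : Fin d × ℕ ≃ ℕ := (Equiv.prodComm _ _).trans (Nat.divModEquiv d).symm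
  have he : ∀ p : Fin d × ℕ, e p = p.2 * d + (p.1 : ℕ) := fun p => rfl
  have h1 : ∑' m, g m = ∑' p : Fin d × ℕ, g (p.2 * d + (p.1 : ℕ)) := by
    rw [← e.tsum_eq g]
    exact tsum_congr fun p => by rw [he]
  have hsum : Summable (fun p : Fin d × ℕ => g (p.2 * d + (p.1 : ℕ))) := by
    have := hg.comp_injective e.injective
    refine this.congr fun p => ?_
    simp [Function.comp, he]
  rw [h1, Summable.tsum_prod' hsum hsum.prod_factor, tsum_fintype]
  rw [Fin.sum_univ_eq_sum_range (fun b => ∑' n : ℕ, g (n * d + b)) d]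

lemma aux_reindex' {d : ℕ} (hd : d ≠ 0) (f : ℕ → ℂ) (hf : Summable fun m => f (m + 1)) :
    ∑' m, f (m + 1) = ∑ a ∈ Finset.Icc 1 d, ∑' n : ℕ, f (n * d + a) := by
  rw [aux_reindex hd _ hf]
  rw [show Finset.Icc 1 d = Finset.Ico 1 (d + 1) from by rw [Finset.Ico_add_one_right_eq_Icc]]
  rw [Finset.sum_Ico_eq_sum_range]
  simp only [Nat.add_sub_cancel]
  refine Finset.sum_congr rfl fun b _ => tsum_congr fun n => ?_
  show f (n * d + b + 1) = f (n * d + (1 + b))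
  exact congrArg f (by omega)

lemma aux_hz {lam : ℝ} (h0 : 0 < lam) {d : ℕ} (hd : d ≠ 0) (a : ℕ) (w : ℂ) :
    (∑' n : ℕ, ((lam ^ d : ℝ) : ℂ) ^ n * ((((n : ℝ) + (a : ℝ) / (d : ℝ) : ℝ)) : ℂ) ^ w)
      = (((lam : ℂ) ^ a * (d : ℂ) ^ w))⁻¹ *
          ∑' n : ℕ, (lam : ℂ) ^ (n * d + a) * ((n * d + a : ℕ) : ℂ) ^ w := by
  have hdR : (0 : ℝ) < (d : ℝ) := by exact_mod_cast Nat.pos_of_ne_zero hd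
  have hlC : (lam : ℂ) ≠ 0 := Complex.ofReal_ne_zero.mpr h0.ne'
  have hdw : (d : ℂ) ^ w ≠ 0 := by
    rw [Complex.cpow_def_of_ne_zero (by exact_mod_cast hdR.ne')]
    exact Complex.exp_ne_zero _
  rw [← tsum_mul_left]
  refine tsum_congr fun n => ?_
  have h1 : ((n * d + a : ℕ) : ℝ) = (d : ℝ) * ((n : ℝ) + (a : ℝ) / (d : ℝ)) := by
    field_simp
    try push_cast
    try ring
  have hcp : ((n * d + a : ℕ) : ℂ) ^ w
      = (d : ℂ) ^ w * ((((n : ℝ) + (a : ℝ) / (d : ℝ) : ℝ)) : ℂ) ^ w := by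
    have h2 : ((n * d + a : ℕ) : ℂ)
        = (((d : ℝ) * ((n : ℝ) + (a : ℝ) / (d : ℝ)) : ℝ) : ℂ) := by
      rw [← h1]; push_cast; ring
    rw [h2, Complex.ofReal_mul, Complex.mul_cpow_ofReal_nonneg hdR.le (by positivity), Complex.ofReal_natCast]
  have hlp : ((lam ^ d : ℝ) : ℂ) ^ n = (lam : ℂ) ^ (n * d) := by
    rw [Complex.ofReal_pow, ← pow_mul, mul_comm]
  rw [hcp, hlp, pow_add]
  field_simp
  try ring

/-- for an integer `d ≥ 1`, a Dirichlet character `χ` mod `d`, real `0 < λ < 1`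
and `s ∈ ℂ`, `s ≠ 1`:
`L_λ(s, χ) = d^{-s}·∑_{a=1}^{d} λ^a·χ(a)·ζ_{λ^d}(s, a/d)`, where `d^{-s} = exp(-s·log d)`. -/
theorem lambdaLFunction_eq_sum_hurwitzLambdaZeta (d : ℕ) (hd : 1 ≤ d)
    (χ : DirichletCharacter ℂ d) (lam : ℝ) (h0 : 0 < lam) (h1 : lam < 1)
    (s : ℂ) (hs : s ≠ 1) :
    lambdaLFunction χ lam s =
      (d : ℂ) ^ (-s) *
        ∑ a ∈ Finset.Icc 1 d,
          (lam : ℂ) ^ a * χ ((a : ℕ) : ZMod d) * hurwitzLambdaZeta (lam ^ d) ((a : ℝ) / d) s := by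
  have hd0 : d ≠ 0 := Nat.one_le_iff_ne_zero.mp hd
  have hdC : (d : ℂ) ≠ 0 := Nat.cast_ne_zero.mpr hd0
  have hlC : (lam : ℂ) ≠ 0 := Complex.ofReal_ne_zero.mpr h0.ne'
  have hs1 : s - 1 ≠ 0 := sub_ne_zero.mpr hs
  have h1s : (1 : ℂ) - s ≠ 0 := fun h => hs (by linear_combination -h)
  have hD : (d : ℂ) ^ (-s) ≠ 0 := by
    rw [Complex.cpow_def_of_ne_zero hdC]; exact Complex.exp_ne_zero _
  have hsplit : (d : ℂ) ^ ((1 : ℂ) - s) = (d : ℂ) * (d : ℂ) ^ (-s) := by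
    rw [sub_eq_add_neg, Complex.cpow_add _ _ hdC, Complex.cpow_one]
  have hlog : ((Real.log (lam ^ d) : ℝ) : ℂ) = (d : ℂ) * (Real.log lam : ℂ) := by
    rw [Real.log_pow]; push_cast; ring
  have key : ∀ w : ℂ,
      (∑' m : ℕ, χ ((m + 1 : ℕ) : ZMod d) * (lam : ℂ) ^ (m + 1) * ((m + 1 : ℕ) : ℂ) ^ w)
      = ∑ a ∈ Finset.Icc 1 d, ∑' n : ℕ,
          χ ((n * d + a : ℕ) : ZMod d) * (lam : ℂ) ^ (n * d + a) * ((n * d + a : ℕ) : ℂ) ^ w :=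
    fun w => aux_reindex' hd0
      (fun k => χ ((k : ℕ) : ZMod d) * (lam : ℂ) ^ k * ((k : ℕ) : ℂ) ^ w)
      (aux_summable χ h0 h1 w)
  have key2 : ∀ w : ℂ,
      (∑' m : ℕ, χ ((m + 1 : ℕ) : ZMod d) * (lam : ℂ) ^ (m + 1) * ((m + 1 : ℕ) : ℂ) ^ w)
      = ∑ a ∈ Finset.Icc 1 d, χ ((a : ℕ) : ZMod d) *
          ∑' n : ℕ, (lam : ℂ) ^ (n * d + a) * ((n * d + a : ℕ) : ℂ) ^ w := by
    intro w
    rw [key w]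
    refine Finset.sum_congr rfl fun a _ => ?_
    rw [← tsum_mul_left]
    refine tsum_congr fun n => ?_
    have hcast : ((n * d + a : ℕ) : ZMod d) = ((a : ℕ) : ZMod d) := by
      push_cast
      simp [ZMod.natCast_self]
    rw [hcast]; ring
  rw [lambdaLFunction, key2 (-s), key2 (1 - s), Finset.mul_sum, Finset.mul_sum,
    ← Finset.sum_sub_distrib]
  refine Finset.sum_congr rfl fun a _ => ?_
  rw [hurwitzLambdaZeta, aux_hz h0 hd0 a (1 - s), aux_hz h0 hd0 a (-s), hlog, hsplit]
  have hpa : (lam : ℂ) ^ a ≠ 0 := pow_ne_zero _ hlC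
  field_simp [hpa, hdC, hD, hs1, h1s]
  ring
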